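/- Let α > 0 and let c_j = α·j/(1+α·j) for positive integers j. Then for all integers 1 ≤ k ≤ ℓ, the product ∏_{j=k}^{ℓ} c_j is at most ((1+αk)/(1+αℓ))^{1/α}. -/

import Mathlib

open Finset

theorem stmt_5 (α : ℝ) (hα : 0 < α) (k ℓ : ℕ) (hk : 1 ≤ k) (hkl : k ≤ ℓ) :
    ∏ j ∈ Finset.Icc k ℓ, (α * (j : ℝ) / (1 + α * (j : ℝ)))
      ≤ ((1 + α * (k : ℝ)) / (1 + α * (ℓ : ℝ))) ^ (1 / α) := by
  have hden : ∀ j : ℕ, (0:ℝ) < 1 + α * j := fun j => by positivity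
  have hpos : ∀ j ∈ Finset.Icc k ℓ, (0:ℝ) < α * j / (1 + α * j) := by
    intro j hj
    simp only [mem_Icc] at hj
    have h1 : (1:ℝ) ≤ j := by exact_mod_cast le_trans hk hj.1
    have h0 : (0:ℝ) < j := lt_of_lt_of_le one_pos h1
    positivity
  have hP : (0:ℝ) < ∏ j ∈ Finset.Icc k ℓ, (α * (j : ℝ) / (1 + α * (j : ℝ))) :=
    Finset.prod_pos hpos
  have hq : (0:ℝ) < (1 + α * k) / (1 + α * ℓ) := div_pos (hden k) (hden ℓ)
  rw [← Real.log_le_log_iff hP (Real.rpow_pos_of_pos hq _), Real.log_rpow hq,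
    Real.log_prod (fun j hj => (hpos j hj).ne')]
  set g : ℕ → ℝ := fun j => (1 / α) * Real.log (1 + α * j) with hg
  -- Step 1: termwise log bound
  have step1 : ∀ j ∈ Finset.Icc k ℓ,
      Real.log (α * j / (1 + α * j)) ≤ -(1 / (1 + α * j)) := by
    intro j hj
    have h := Real.log_le_sub_one_of_pos (hpos j hj)
    have heq : α * (j:ℝ) / (1 + α * j) - 1 = -(1 / (1 + α * j)) := by
      field_simp
      ring
    linarith [heq ▸ h]
  have h2 : ∑ j ∈ Finset.Icc k ℓ, Real.log (α * j / (1 + α * j))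
      ≤ ∑ j ∈ Finset.Icc k ℓ, -(1 / (1 + α * (j:ℝ))) :=
    Finset.sum_le_sum step1
  -- Step 2: drop the last (nonpositive) term
  have h3 : ∑ j ∈ Finset.Icc k ℓ, -(1 / (1 + α * (j:ℝ)))
      ≤ ∑ j ∈ Finset.Ico k ℓ, -(1 / (1 + α * (j:ℝ))) := by
    have : Finset.Icc k ℓ = Finset.Ico k (ℓ + 1) := by
      rw [Finset.Ico_add_one_right_eq_Icc]
    rw [this, Finset.sum_Ico_succ_top hkl]
    have h := hden ℓ
    have : (0:ℝ) ≤ 1 / (1 + α * (ℓ:ℝ)) := by positivity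
    linarith
  -- Step 3: termwise comparison with telescoping difference
  have step3 : ∀ j ∈ Finset.Ico k ℓ,
      -(1 / (1 + α * (j:ℝ))) ≤ g j - g (j + 1) := by
    intro j hj
    have hj0 := hden j
    have hj1 := hden (j + 1)
    have hrat : (0:ℝ) < (1 + α * (j + 1 : ℕ)) / (1 + α * j) := div_pos hj1 hj0
    have h := Real.log_le_sub_one_of_pos hrat
    have hlogdiv : Real.log ((1 + α * ((j:ℕ) + 1 : ℕ)) / (1 + α * j))
        = Real.log (1 + α * ((j:ℕ) + 1 : ℕ)) - Real.log (1 + α * j) :=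
      Real.log_div hj1.ne' hj0.ne'
    have hcast : ((j + 1 : ℕ) : ℝ) = (j : ℝ) + 1 := by push_cast; ring
    have hsub : (1 + α * ((j + 1 : ℕ) : ℝ)) / (1 + α * j) - 1 = α / (1 + α * j) := by
      rw [hcast]; field_simp; ring
    have key : Real.log (1 + α * ((j + 1 : ℕ) : ℝ)) - Real.log (1 + α * j)
        ≤ α / (1 + α * j) := by
      rw [← hlogdiv, ← hsub]; exact h
    simp only [hg]
    have hαinv : (0:ℝ) ≤ 1 / α := by positivity
    have key2 := mul_le_mul_of_nonneg_left key hαinv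
    have heq2 : (1/α) * (α / (1 + α * (j:ℝ))) = 1 / (1 + α * (j:ℝ)) := by
      field_simp
    linarith
  have h4 : ∑ j ∈ Finset.Ico k ℓ, -(1 / (1 + α * (j:ℝ)))
      ≤ ∑ j ∈ Finset.Ico k ℓ, (g j - g (j + 1)) := Finset.sum_le_sum step3
  -- telescoping
  have h5 : ∑ j ∈ Finset.Ico k ℓ, (g j - g (j + 1)) = g k - g ℓ := by
    rw [Finset.sum_Ico_eq_sub _ hkl, Finset.sum_range_sub' g, Finset.sum_range_sub' g]
    ring
  have h6 : g k - g ℓ = 1 / α * Real.log ((1 + α * k) / (1 + α * ℓ)) := by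
    simp only [hg]
    rw [Real.log_div (hden k).ne' (hden ℓ).ne']
    ring
  linarith
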